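/- No cm-slender group contains an element of finite order other than the identity, and no cm-slender group contains a subgroup isomorphic to ℚ. -/

import Mathlib

universe u

/-- A group `G` is cm-slender if every group homomorphism from a completely
metrizable topological group to `G` has open kernel. -/
def IsCMSlender (G : Type*) [Group G] : Prop :=
  ∀ (H : Type u) [Group H] [tH : TopologicalSpace H] [IsTopologicalGroup H],
    (∃ mH : MetricSpace H,
      mH.toUniformSpace.toTopologicalSpace = tH ∧ @CompleteSpace H mH.toUniformSpace) →
    ∀ φ : H →* G, IsOpen ((φ : H → G) ⁻¹' {1})

/-- If `G` is cm-slender, it has no element of prime order. -/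
lemma cmSlender_no_prime_order {G : Type*} [Group G] (h : IsCMSlender.{0} G)
    (g : G) (p : ℕ) (hp : p.Prime) (hg : orderOf g = p) : False := by
  haveI : Fact p.Prime := ⟨hp⟩
  letI : TopologicalSpace (ZMod p) := ⊥
  haveI : DiscreteTopology (ZMod p) := ⟨rfl⟩
  have : PolishSpace (ZMod p) := inferInstance
  have hpol : PolishSpace (∀ _ : ℕ, ZMod p) := inferInstance
  haveI : IsTopologicalAddGroup (ZMod p) :=
    { continuous_add := continuous_of_discreteTopology
      continuous_neg := continuous_of_discreteTopology }
  set V := ∀ _ : ℕ, ZMod p with hV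
  -- the submodule of finitely supported vectors
  set W : Submodule (ZMod p) V :=
    { carrier := {x | (Function.support x).Finite}
      add_mem' := fun {a b} ha hb => Set.Finite.subset (ha.union hb)
        (Function.support_add a b)
      zero_mem' := by simp [Function.support_zero]
      smul_mem' := fun c x hx => Set.Finite.subset hx fun i hi => by
        simp only [Function.mem_support] at hi ⊢
        intro h0
        exact hi (show c • x i = 0 by rw [h0, smul_zero]) }
    with hW
  have hWmem : ∀ x : V, (Function.support x).Finite → x ∈ W := fun x hx => hx
  set v : V := fun _ => (1 : ZMod p) with hv
  have hv_not : v ∉ W := by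
    intro hmem
    have hsupp : Function.support v = Set.univ := by
      ext i; simp [hv, one_ne_zero]
    have hfin : (Function.support v).Finite := hmem
    rw [hsupp] at hfin
    exact Set.infinite_univ hfin
  -- a linear functional vanishing on W but not on v
  have hq : (Submodule.Quotient.mk v : V ⧸ W) ≠ 0 := by
    rw [Ne, Submodule.Quotient.mk_eq_zero]; exact hv_not
  obtain ⟨φ, hφ⟩ : ∃ φ : Module.Dual (ZMod p) (V ⧸ W),
      φ (Submodule.Quotient.mk v) ≠ 0 := by
    by_contra hc
    push_neg at hc
    exact hq ((Module.forall_dual_apply_eq_zero_iff (ZMod p) _).mp hc)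
  set f : V →ₗ[ZMod p] ZMod p := φ.comp W.mkQ with hf
  have hfW : ∀ x ∈ W, f x = 0 := by
    intro x hx
    simp [hf, (Submodule.Quotient.mk_eq_zero W).mpr hx]
  have hfv : f v ≠ 0 := hφ
  -- the homomorphism ZMod p → G, k ↦ g ^ k
  have hgp : (p : ℤ) • (Additive.ofMul g) = 0 := by
    have hpow : g ^ (p : ℤ) = 1 := by rw [zpow_natCast, ← hg, pow_orderOf_eq_one]
    simpa using congrArg Additive.ofMul hpow
  set χ : ZMod p →+ Additive G :=
    ZMod.lift p ⟨(zmultiplesHom (Additive G)) (Additive.ofMul g), by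
      simpa [zmultiplesHom_apply] using hgp⟩ with hχ
  have hχ_inj : ∀ k : ZMod p, χ k = 0 → k = 0 := by
    intro k hk
    have hcast : ((k.val : ℤ) : ZMod p) = k := by
      simp [ZMod.natCast_val]
    have hk' : χ ((k.val : ℤ) : ZMod p) = 0 := by rw [hcast]; exact hk
    rw [hχ, ZMod.lift_coe] at hk'
    simp only [zmultiplesHom_apply, natCast_zsmul] at hk'
    have hpow : g ^ (k.val : ℕ) = 1 := by
      have := congrArg Additive.toMul hk'
      simpa using this
    have hdvd : p ∣ k.val := by
      have hd := orderOf_dvd_of_pow_eq_one hpow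
      rwa [hg] at hd
    have hlt : k.val < p := ZMod.val_lt k
    have hval0 : k.val = 0 := Nat.eq_zero_of_dvd_of_lt hdvd hlt
    exact (ZMod.val_eq_zero k).mp hval0
  -- the total homomorphism
  set F : V →+ Additive G := χ.comp f.toAddMonoidHom with hF
  set ψ : Multiplicative V →* G := AddMonoidHom.toMultiplicativeLeft F with hψ
  have hψ_eq : ∀ x : V, (ψ (Multiplicative.ofAdd x) = 1 ↔ f x = 0) := by
    intro x
    have h1 : ψ (Multiplicative.ofAdd x) = Additive.toMul (χ (f x)) := rfl
    rw [h1]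
    constructor
    · intro hx
      exact hχ_inj _ (by simpa [toMul_eq_one] using hx)
    · intro hx
      rw [hf] at hx
      rw [show χ (f x) = χ 0 from by rw [hf, hx]]
      simp
  have hopen : IsOpen ((ψ : Multiplicative V → G) ⁻¹' {1}) := by
    apply h (Multiplicative V)
    obtain ⟨m, hm, hc⟩ := hpol.complete
    exact ⟨m, hm, hc⟩
  have hopenV : IsOpen {x : V | f x = 0} := by
    have heq : ((ψ : Multiplicative V → G) ⁻¹' {1}) = {x : V | f x = 0} :=
      Set.ext fun x => hψ_eq x
    exact heq ▸ hopen
  obtain ⟨I, U, hU, hsub⟩ := (isOpen_pi_iff.mp hopenV) 0 (map_zero f)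
  have hvanish : ∀ x : V, (∀ i ∈ I, x i = 0) → f x = 0 := by
    intro x hx
    apply hsub
    intro i hi
    rw [hx i hi]
    exact (hU i hi).2
  have hzero : ∀ x : V, f x = 0 := by
    intro x
    have hdecomp : x = (fun i => if i ∈ I then x i else 0)
        + (fun i => if i ∈ I then 0 else x i) := by
      funext i; by_cases hi : i ∈ I <;> simp [hi]
    have h1 : f (fun i => if i ∈ I then x i else 0) = 0 := by
      apply hfW
      apply hWmem
      apply Set.Finite.subset I.finite_toSet
      intro i hi
      simp only [Function.mem_support] at hi
      by_contra hiI
      simp only [Finset.mem_coe] at hiI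
      simp [hiI] at hi
    have h2 : f (fun i => if i ∈ I then 0 else x i) = 0 :=
      hvanish _ (fun i hi => by simp [hi])
    rw [hdecomp, map_add, h1, h2, add_zero]
  exact hfv (hzero v)

/-- No cm-slender group has a nontrivial element of finite order, and no cm-slender
group contains a subgroup isomorphic to `ℚ`. -/
theorem cmSlender_torsionFree_and_no_rat
    {G : Type*} [Group G] (h : IsCMSlender.{0} G) :
    (∀ g : G, ∀ n : ℕ, 1 ≤ n → g ^ n = 1 → g = 1) ∧
    ¬ ∃ f : Multiplicative ℚ →* G, Function.Injective f := by
  constructor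
  · intro g n hn hgn
    by_contra hg1
    have hfin : IsOfFinOrder g := isOfFinOrder_iff_pow_eq_one.mpr ⟨n, hn, hgn⟩
    set m := orderOf g with hm
    have hm0 : m ≠ 0 := (orderOf_pos_iff.mpr hfin).ne'
    have hm1 : m ≠ 1 := fun hc => hg1 (orderOf_eq_one_iff.mp hc)
    set p := m.minFac with hpdef
    have hp : p.Prime := Nat.minFac_prime hm1
    have hpd : p ∣ m := Nat.minFac_dvd m
    have hmp : m / p ≠ 0 := by
      have := Nat.div_pos (Nat.le_of_dvd (Nat.pos_of_ne_zero hm0) hpd) hp.pos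
      omega
    have hord : orderOf (g ^ (m / p)) = p := by
      rw [orderOf_pow' g hmp]
      rw [← hm]
      rw [Nat.gcd_eq_right (Nat.div_dvd_of_dvd hpd)]
      exact Nat.div_div_self hpd hm0
    exact cmSlender_no_prime_order h _ p hp hord
  · rintro ⟨f, hfinj⟩
    obtain ⟨φ, hφ⟩ : ∃ φ : Module.Dual ℚ ℝ, φ 1 ≠ 0 := by
      by_contra hc
      push_neg at hc
      exact one_ne_zero ((Module.forall_dual_apply_eq_zero_iff ℚ (1 : ℝ)).mp hc)
    set ψ : Multiplicative ℝ →* G :=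
      f.comp (AddMonoidHom.toMultiplicative φ.toAddMonoidHom) with hψ
    have hopen : IsOpen ((ψ : Multiplicative ℝ → G) ⁻¹' {1}) := by
      apply h (Multiplicative ℝ)
      obtain ⟨m, hm, hc⟩ := (inferInstance : PolishSpace ℝ).complete
      exact ⟨m, hm, hc⟩
    have hker : ∀ x : ℝ, ψ (Multiplicative.ofAdd x) = 1 ↔ φ x = 0 := by
      intro x
      have h1 : ψ (Multiplicative.ofAdd x) = f (Multiplicative.ofAdd (φ x)) := rfl
      rw [h1]
      constructor
      · intro hx
        have := hfinj (hx.trans (map_one f).symm)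
        simpa using this
      · intro hx
        rw [hx]
        simpa using map_one f
    have hopenR : IsOpen {x : ℝ | φ x = 0} := by
      have heq : ((ψ : Multiplicative ℝ → G) ⁻¹' {1}) = {x : ℝ | φ x = 0} :=
        Set.ext fun x => hker x
      exact heq ▸ hopen
    obtain ⟨ε, hε, hball⟩ := Metric.isOpen_iff.mp hopenR 0 (by simp)
    have hφ0 : ∀ x : ℝ, φ x = 0 := by
      intro x
      obtain ⟨n, hn⟩ := exists_nat_gt (|x| / ε)
      have hn1 : |x| / ε < (n : ℝ) + 1 := by linarith
      have h2 : |x| < ε * ((n : ℝ) + 1) := by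
        rw [div_lt_iff₀ hε] at hn1
        linarith
      have hn0 : (0 : ℝ) < (n : ℝ) + 1 := by positivity
      have hmem : x / ((n : ℝ) + 1) ∈ Metric.ball (0 : ℝ) ε := by
        rw [Metric.mem_ball, dist_zero_right, Real.norm_eq_abs, abs_div,
          abs_of_pos hn0, div_lt_iff₀ hn0]
        linarith
      have hx0 : φ (x / ((n : ℝ) + 1)) = 0 := hball hmem
      have hxeq : x = ((n : ℚ) + 1) • (x / ((n : ℝ) + 1)) := by
        rw [Rat.smul_def]
        push_cast
        field_simp
      rw [hxeq, map_smul, hx0, smul_zero]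
    exact hφ (hφ0 1)
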